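/- Let θ be a horizontal equivariant G-valued k-form on P, and assume ∼ on P is G-invariant (for every g ∈ G, x ∼ y implies x·g ∼ y·g). Then for every infinitesimal k-simplex (a₀,…,a_k) in M, the element u₀ ∘ θ(u₀,…,u_k) ∘ u₀⁻¹ ∈ Φ(a₀,a₀) is independent of the choice of infinitesimal k-simplex (u₀,…,u_k) in P with π(u_i) = a_i for all i: any two such choices give the same element of Φ(a₀,a₀). -/

import Mathlib

open CategoryTheory

/-- The principal bundle `P`: arrows of the groupoid `Φ` with domain `e` and codomain
in a set `M` of objects.  For `x : Bdl e M`, `x.1` is the codomain `π x ∈ M` and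
`x.2 : e ⟶ x.1` is the arrow itself. -/
def Bdl {Φ : Type*} [Groupoid Φ] (e : Φ) (M : Set Φ) : Type _ :=
  Σ a : M, e ⟶ (a : Φ)

/-- The right action of the group `G = Φ(e,e)` on `P` by precomposition:
`x · g = x ∘ g`. -/
def Bdl.act {Φ : Type*} [Groupoid Φ] {e : Φ} {M : Set Φ}
    (x : Bdl e M) (g : e ⟶ e) : Bdl e M :=
  ⟨x.1, g ≫ x.2⟩

/-- A connection: to each pair `a ∼ b` in `M` it assigns an arrow `∇(a,b) : b ⟶ a`,
with `∇(a,a) = id` and `∇(b,a) = ∇(a,b)⁻¹`. -/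
structure Conn {Φ : Type*} [Groupoid Φ] (e : Φ) (M : Set Φ) (nbM : M → M → Prop) where
  map : ∀ a b : M, nbM a b → ((b : Φ) ⟶ (a : Φ))
  map_refl : ∀ (a : M) (h : nbM a a), map a a h = 𝟙 (a : Φ)
  map_symm : ∀ (a b : M) (h : nbM a b) (h' : nbM b a),
    map b a h' = Groupoid.inv (map a b h)

/-- The connection form `ω(x,y) = x⁻¹ ∘ ∇(π x, π y) ∘ y ∈ G`
(composition right-to-left; in Lean's diagrammatic order: `y ≫ ∇ ≫ x⁻¹`). -/
def connForm {Φ : Type*} [Groupoid Φ] {e : Φ} {M : Set Φ} {nbM : M → M → Prop}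
    (D : Conn e M nbM) (x y : Bdl e M) (h : nbM x.1 y.1) : e ⟶ e :=
  y.2 ≫ D.map x.1 y.1 h ≫ Groupoid.inv x.2

/-- An infinitesimal `k`-simplex in `P`: a `(k+1)`-tuple of pairwise neighbours. -/
def IsSimplex {Φ : Type*} [Groupoid Φ] {e : Φ} {M : Set Φ}
    (nbP : Bdl e M → Bdl e M → Prop) {k : ℕ} (u : Fin (k + 1) → Bdl e M) : Prop :=
  ∀ i j, nbP (u i) (u j)

/-- A `G`-valued `k`-form `θ` on `P` is horizontal if
`θ(u₀, u₁·g₁, …, u_k·g_k) = θ(u₀,…,u_k)` whenever both tuples are infinitesimal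
`k`-simplices. -/
def Horizontal {Φ : Type*} [Groupoid Φ] {e : Φ} {M : Set Φ}
    (nbP : Bdl e M → Bdl e M → Prop) {k : ℕ}
    (θ : ∀ u : Fin (k + 1) → Bdl e M, IsSimplex nbP u → (e ⟶ e)) : Prop :=
  ∀ (u : Fin (k + 1) → Bdl e M) (g : Fin k → (e ⟶ e))
    (hu : IsSimplex nbP u)
    (hu' : IsSimplex nbP (Fin.cases (u 0) (fun i => (u i.succ).act (g i)))),
    θ (Fin.cases (u 0) (fun i => (u i.succ).act (g i))) hu' = θ u hu

/-- A `G`-valued `k`-form `θ` on `P` is equivariant if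
`θ(u₀·g, …, u_k·g) = g⁻¹ ∘ θ(u₀,…,u_k) ∘ g` whenever the shifted tuple is an
infinitesimal `k`-simplex. -/
def Equivariant {Φ : Type*} [Groupoid Φ] {e : Φ} {M : Set Φ}
    (nbP : Bdl e M → Bdl e M → Prop) {k : ℕ}
    (θ : ∀ u : Fin (k + 1) → Bdl e M, IsSimplex nbP u → (e ⟶ e)) : Prop :=
  ∀ (u : Fin (k + 1) → Bdl e M) (g : e ⟶ e)
    (hu : IsSimplex nbP u)
    (hu' : IsSimplex nbP (fun i => (u i).act g)),
    θ (fun i => (u i).act g) hu' = g ≫ θ u hu ≫ Groupoid.inv g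

/-- let `θ` be a horizontal equivariant `G`-valued `k`-form on `P`,
with `∼` on `P` `G`-invariant.  For every infinitesimal `k`-simplex `(a₀,…,a_k)`
in `M`, the element `u₀ ∘ θ(u₀,…,u_k) ∘ u₀⁻¹ ∈ Φ(a₀,a₀)` (in Lean's diagrammatic
order: `u₀⁻¹ ≫ θ(u) ≫ u₀`) does not depend on the choice of lift `(u₀,…,u_k)`
of `(a₀,…,a_k)`. -/
theorem stmt9 {Φ : Type*} [Groupoid Φ] (e : Φ) (M : Set Φ)
    (nbM : M → M → Prop) (nbP : Bdl e M → Bdl e M → Prop)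
    (hMrefl : ∀ a, nbM a a) (hMsymm : ∀ a b, nbM a b → nbM b a)
    (hPrefl : ∀ x, nbP x x) (hPsymm : ∀ x y, nbP x y → nbP y x)
    (hcompat : ∀ x y : Bdl e M, nbP x y → nbM x.1 y.1)
    (hGinv : ∀ (x y : Bdl e M) (g : e ⟶ e), nbP x y → nbP (x.act g) (y.act g))
    (k : ℕ)
    (θ : ∀ u : Fin (k + 1) → Bdl e M, IsSimplex nbP u → (e ⟶ e))
    (hhor : Horizontal nbP θ) (hequi : Equivariant nbP θ)
    (a : Fin (k + 1) → M)
    (x x' : (i : Fin (k + 1)) → (e ⟶ (a i : Φ)))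
    (hx : IsSimplex nbP (fun i => ⟨a i, x i⟩))
    (hx' : IsSimplex nbP (fun i => ⟨a i, x' i⟩)) :
    Groupoid.inv (x 0) ≫ θ (fun i => ⟨a i, x i⟩) hx ≫ x 0
      = Groupoid.inv (x' 0) ≫ θ (fun i => ⟨a i, x' i⟩) hx' ≫ x' 0 := by
  classical
  have key : ∀ (u v : Fin (k + 1) → Bdl e M) (hu : IsSimplex nbP u)
      (hv : IsSimplex nbP v), u = v → θ u hu = θ v hv := by
    rintro u v hu hv rfl; rfl
  set g : e ⟶ e := x' 0 ≫ Groupoid.inv (x 0) with hg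
  set u : Fin (k + 1) → Bdl e M := fun i => Bdl.act ⟨a i, x i⟩ g with hudef
  have hu' : IsSimplex nbP u := fun i j => hGinv _ _ g (hx i j)
  have hequiv := hequi (fun i => ⟨a i, x i⟩) g hx hu'
  set g' : Fin k → (e ⟶ e) :=
    fun i => x' i.succ ≫ Groupoid.inv (x i.succ) ≫ Groupoid.inv g with hg'
  have htup : (Fin.cases (u 0) (fun i => Bdl.act (u i.succ) (g' i)) :
      Fin (k + 1) → Bdl e M) = fun i => ⟨a i, x' i⟩ := by
    funext i
    induction i using Fin.cases with
    | zero =>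
      have : g ≫ x 0 = x' 0 := by
        rw [hg]; simp [Groupoid.inv_eq_inv]
      simp only [Fin.cases_zero, hudef, Bdl.act, this]
      rfl
    | succ i =>
      have h2 : g' i ≫ g ≫ x i.succ = x' i.succ := by
        rw [hg']; simp [Groupoid.inv_eq_inv]
      show (⟨a i.succ, g' i ≫ g ≫ x i.succ⟩ : Bdl e M) = ⟨a i.succ, x' i.succ⟩
      rw [h2]
  have hx'' : IsSimplex nbP
      (Fin.cases (u 0) (fun i => Bdl.act (u i.succ) (g' i))) := by
    rw [htup]; exact hx'
  have hhoriz := hhor u g' hu' hx''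
  have h1 : θ (fun i => ⟨a i, x' i⟩) hx' = g ≫ θ (fun i => ⟨a i, x i⟩) hx ≫ Groupoid.inv g := by
    rw [← hequiv]
    exact (key _ _ hx'' hx' htup).symm.trans hhoriz
  rw [h1, hg]
  simp [Groupoid.inv_eq_inv]
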